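/- Let f₀,F : ℝⁿ×ℝ^d → ℝ be C² functions and let (x̄,w̄) satisfy F(x̄,w̄) = 0, ∇ₓF(x̄,w̄) ≠ 0, and ∇ₓf₀(x̄,w̄) = 0 (Lagrange multiplier λ = 0). Define the linear maps A'₁(v,γ) = ∇²ₓₓf₀(x̄,w̄)v + γ∇ₓF(x̄,w̄) (with values in ℝⁿ) and A'₂(v,γ) = ∇²_{wx}f₀(x̄,w̄)v + γ∇_wF(x̄,w̄) (with values in ℝ^d) for (v,γ) ∈ ℝⁿ×ℝ. Assume: (1) ker A'₁ ∩ ker A'₂ = {(0,0)}; (2) every (v,γ) ∈ ker A'₁ with ⟨∇ₓF(x̄,w̄),v⟩ = 0 lies in ker A'₂; (3) every (v,γ) ∈ ker A'₁ with ⟨∇ₓF(x̄,w̄),v⟩ > 0 and γ ≥ 0 lies in ker A'₂. Then the stationary point set map S has a Lipschitz continuous single-valued localization around w̄ for x̄. -/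

import Mathlib

noncomputable section

/-- The Euclidean space `ℝⁿ`. -/
abbrev En (n : ℕ) := EuclideanSpace ℝ (Fin n)

/-- The partial gradient in `x` of a function `f : ℝⁿ × ℝ^d → ℝ`. -/
def gradx {n d : ℕ} (f : En n × En d → ℝ) (x : En n) (w : En d) : En n :=
  gradient (fun y => f (y, w)) x

/-- The stationary (KKT) point set `S(w)` of the problem
`minimize f₀(x,w) subject to F(x,w) ≤ 0`. -/
def Sgen {n d : ℕ} (f₀ F : En n × En d → ℝ) (w : En d) : Set (En n) :=
  {x | F (x, w) ≤ 0 ∧ ∃ μ : ℝ, 0 ≤ μ ∧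
    gradx f₀ x w + μ • gradx F x w = 0 ∧ μ * F (x, w) = 0}

/-- The partial gradient in `w` of a function `f : ℝⁿ × ℝ^d → ℝ`. -/
def gradw {n d : ℕ} (f : En n × En d → ℝ) (x : En n) (w : En d) : En d :=
  gradient (fun u => f (x, u)) w

/-- The Hessian `∇²ₓₓf(x0,w0)` as a linear map `ℝⁿ → ℝⁿ`. -/
def hessxx {n d : ℕ} (f : En n × En d → ℝ) (x0 : En n) (w0 : En d) : En n →L[ℝ] En n :=
  fderiv ℝ (fun y => gradx f y w0) x0

/-- The mixed second-order derivative `∇²_{wx}f(x0,w0)`, regarded as a linear map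
`ℝⁿ → ℝ^d` (the adjoint of the derivative in `w` of `w ↦ ∇ₓf(x0,w)`). -/
def mixwx {n d : ℕ} (f : En n × En d → ℝ) (x0 : En n) (w0 : En d) : En n →L[ℝ] En d :=
  ContinuousLinearMap.adjoint (fderiv ℝ (fun w => gradx f x0 w) w0)

/-- `S` has a Lipschitz continuous single-valued localization around `w0` for `x0`:
there are neighborhoods `V` of `w0`, `U` of `x0` and a Lipschitz continuous map
`s` on `V` with `s(w0) = x0` and `S(w) ∩ U = {s(w)}` for every `w ∈ V`. -/
def HasLipschitzLocalization {n d : ℕ} (S : En d → Set (En n))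
    (w0 : En d) (x0 : En n) : Prop :=
  ∃ V ∈ nhds w0, ∃ U ∈ nhds x0, ∃ s : En d → En n, ∃ K : NNReal,
    LipschitzOnWith K s V ∧ s w0 = x0 ∧ ∀ w ∈ V, S w ∩ U = {s w}

set_option maxHeartbeats 2000000

open ContinuousLinearMap InnerProductSpace Topology Filter Set Metric
open RealInnerProductSpace


section prelim
variable {n d : ℕ}

lemma hasFDerivAt_mk_left (w : En d) (x : En n) :
    HasFDerivAt (fun y : En n => (y, w)) (ContinuousLinearMap.inl ℝ (En n) (En d)) x := by
  have := (hasFDerivAt_id x).prodMk (hasFDerivAt_const (𝕜 := ℝ) w x)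
  exact this

lemma hasFDerivAt_mk_right (x : En n) (w : En d) :
    HasFDerivAt (fun u : En d => (x, u)) (ContinuousLinearMap.inr ℝ (En n) (En d)) w := by
  have := (hasFDerivAt_const (𝕜 := ℝ) x w).prodMk (hasFDerivAt_id w)
  exact this

lemma gradx_eq (f : En n × En d → ℝ) (hf : Differentiable ℝ f) (x : En n) (w : En d) :
    gradx f x w = (toDual ℝ (En n)).symm
      ((fderiv ℝ f (x, w)).comp (ContinuousLinearMap.inl ℝ (En n) (En d))) := by
  have h2 : HasFDerivAt (fun y : En n => f (y, w))
      ((fderiv ℝ f (x, w)).comp (ContinuousLinearMap.inl ℝ (En n) (En d))) x :=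
    ((hf (x, w)).hasFDerivAt).comp x (hasFDerivAt_mk_left w x)
  rw [gradx, gradient, h2.fderiv]

lemma gradw_eq (f : En n × En d → ℝ) (hf : Differentiable ℝ f) (x : En n) (w : En d) :
    gradw f x w = (toDual ℝ (En d)).symm
      ((fderiv ℝ f (x, w)).comp (ContinuousLinearMap.inr ℝ (En n) (En d))) := by
  have h2 : HasFDerivAt (fun u : En d => f (x, u))
      ((fderiv ℝ f (x, w)).comp (ContinuousLinearMap.inr ℝ (En n) (En d))) w :=
    ((hf (x, w)).hasFDerivAt).comp w (hasFDerivAt_mk_right x w)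
  rw [gradw, gradient, h2.fderiv]

lemma inner_gradx (f : En n × En d → ℝ) (hf : Differentiable ℝ f) (x : En n) (w : En d)
    (v : En n) : ⟪gradx f x w, v⟫ = fderiv ℝ f (x, w) (v, 0) := by
  rw [gradx_eq f hf, toDual_symm_apply]
  simp

lemma inner_gradw (f : En n × En d → ℝ) (hf : Differentiable ℝ f) (x : En n) (w : En d)
    (u : En d) : ⟪gradw f x w, u⟫ = fderiv ℝ f (x, w) (0, u) := by
  rw [gradw_eq f hf, toDual_symm_apply]
  simp

lemma contDiff_gradx (f : En n × En d → ℝ) (hf : ContDiff ℝ 2 f) :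
    ContDiff ℝ 1 (fun p : En n × En d => gradx f p.1 p.2) := by
  have hdiff : Differentiable ℝ f := hf.differentiable (by norm_num)
  have heq : (fun p : En n × En d => gradx f p.1 p.2) =
      fun p => (toDual ℝ (En n)).symm
        ((fderiv ℝ f p).comp (ContinuousLinearMap.inl ℝ (En n) (En d))) := by
    funext p
    exact gradx_eq f hdiff p.1 p.2
  rw [heq]
  have h2 : ContDiff ℝ 1 (fderiv ℝ f) := hf.fderiv_right (le_refl _)
  have h3 : ContDiff ℝ 1 (fun p : En n × En d =>
      ((fderiv ℝ f p).comp (ContinuousLinearMap.inl ℝ (En n) (En d)))) :=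
    ((ContinuousLinearMap.compL ℝ (En n) (En n × En d) ℝ).flip
      (ContinuousLinearMap.inl ℝ (En n) (En d))).contDiff.comp h2
  exact ((toDual ℝ (En n)).symm.toContinuousLinearEquiv.contDiff).comp h3

lemma hess_symm (f : En n × En d → ℝ) (hf : ContDiff ℝ 2 f) (x0 : En n) (w0 : En d)
    (v v' : En n) : ⟪hessxx f x0 w0 v, v'⟫ = ⟪v, hessxx f x0 w0 v'⟫ := by
  set fy : En n → ℝ := fun y => f (y, w0) with hfydef
  have hfy : ContDiff ℝ 2 fy := hf.comp ((contDiff_id).prodMk contDiff_const)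
  have hd1 : ContDiff ℝ 1 (fderiv ℝ fy) := hfy.fderiv_right (le_refl _)
  set f'' := fderiv ℝ (fderiv ℝ fy) x0 with hf''def
  have hd2 : HasFDerivAt (fderiv ℝ fy) f'' x0 :=
    ((hd1.differentiable one_ne_zero) x0).hasFDerivAt
  -- the gradient map in x
  have hGrcd : ContDiff ℝ 1 (fun y : En n => gradx f y w0) := by
    have := (contDiff_gradx f hf).comp ((contDiff_id (E := En n)).prodMk
      (contDiff_const (c := w0)))
    exact this
  have hGr : HasFDerivAt (fun y : En n => gradx f y w0) (hessxx f x0 w0) x0 := by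
    have h := ((hGrcd.differentiable one_ne_zero) x0).hasFDerivAt
    exact h
  have happ : ∀ a b : En n, ⟪b, hessxx f x0 w0 a⟫ = f'' a b := by
    intro a b
    have h4 : HasFDerivAt (fun y => innerSL ℝ b (gradx f y w0))
        ((innerSL ℝ b).comp (hessxx f x0 w0)) x0 :=
      ((innerSL ℝ b).hasFDerivAt).comp x0 hGr
    have h5 : HasFDerivAt (fun y => fderiv ℝ fy y b)
        ((ContinuousLinearMap.apply ℝ ℝ b).comp f'') x0 :=
      ((ContinuousLinearMap.apply ℝ ℝ b).hasFDerivAt).comp x0 hd2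
    have hfun : (fun y => innerSL ℝ b (gradx f y w0)) = fun y => fderiv ℝ fy y b := by
      funext y
      have : gradx f y w0 = (toDual ℝ (En n)).symm (fderiv ℝ fy y) := rfl
      rw [innerSL_apply_apply, real_inner_comm, this, toDual_symm_apply]
    rw [hfun] at h4
    have huniq := h4.unique h5
    have := congrFun (congrArg (fun (L : En n →L[ℝ] ℝ) => (L : En n → ℝ)) huniq) a
    simpa using this
  have e1 : ⟪hessxx f x0 w0 v, v'⟫ = f'' v v' := by
    rw [real_inner_comm]; exact happ v v'
  have e2 : ⟪v, hessxx f x0 w0 v'⟫ = f'' v' v := happ v' v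
  rw [e1, e2]
  exact (hfy.contDiffAt.isSymmSndFDerivAt (by simp [minSmoothness_of_isRCLikeNormedField])).eq v v'


section implicit
variable {P D : Type*} [NormedAddCommGroup P] [NormedSpace ℝ P] [FiniteDimensional ℝ P]
  [NormedAddCommGroup D] [NormedSpace ℝ D] [FiniteDimensional ℝ D]

lemma implicit_branch (G : P × D → P) (p0 : P) (w0 : D) (DG : (P × D) →L[ℝ] P)
    (hG : HasStrictFDerivAt G DG (p0, w0)) (hG0 : G (p0, w0) = 0)
    (hinj : ∀ v : P, DG (v, 0) = 0 → v = 0) :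
    ∃ (σ : D → P) (σ' : D →L[ℝ] P) (U : Set P) (V : Set D),
      U ∈ 𝓝 p0 ∧ V ∈ 𝓝 w0 ∧ σ w0 = p0 ∧
      HasStrictFDerivAt σ σ' w0 ∧ (∀ u, DG (σ' u, u) = 0) ∧
      (∀ w ∈ V, G (σ w, w) = 0) ∧
      (∀ w ∈ V, ∀ p ∈ U, G (p, w) = 0 → p = σ w) := by
  classical
  set Φ : P × D → P × D := fun q => (G q, q.2) with hΦdef
  set DΦ : (P × D) →L[ℝ] (P × D) := DG.prod (ContinuousLinearMap.snd ℝ P D) with hDΦdef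
  have hΦ : HasStrictFDerivAt Φ DΦ (p0, w0) :=
    hG.prodMk (ContinuousLinearMap.snd ℝ P D).hasStrictFDerivAt
  -- DΦ injective hence a linear equivalence
  have hinjΦ : Function.Injective DΦ := by
    rw [injective_iff_map_eq_zero]
    rintro ⟨v, u⟩ h
    have h2 : u = 0 := congrArg Prod.snd h
    have h1 : DG (v, u) = 0 := congrArg Prod.fst h
    rw [h2] at h1 ⊢
    rw [hinj v h1]
    rfl
  have hbij : Function.Bijective DΦ :=
    ⟨hinjΦ, (LinearMap.injective_iff_surjective (f := DΦ.toLinearMap)).mp hinjΦ⟩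
  set T : (P × D) ≃L[ℝ] (P × D) :=
    (LinearEquiv.ofBijective DΦ.toLinearMap hbij).toContinuousLinearEquiv with hTdef
  have hTcoe : (T : (P × D) →L[ℝ] (P × D)) = DΦ := by
    ext q : 1 <;> rfl
  have hΦT : HasStrictFDerivAt Φ ((T : (P × D) ≃L[ℝ] (P × D)) : (P × D) →L[ℝ] (P × D)) (p0, w0) := by
    rw [hTcoe]; exact hΦ
  set ph := hΦT.toOpenPartialHomeomorph Φ with hphdef
  have hsource : (p0, w0) ∈ ph.source := hΦT.mem_toOpenPartialHomeomorph_source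
  have hphcoe : (ph : P × D → P × D) = Φ := rfl
  set ℓ : P × D → P × D := hΦT.localInverse Φ T (p0, w0) with hℓdef
  set σ : D → P := fun w => (ℓ (0, w)).1 with hσdef
  have hΦ0 : Φ (p0, w0) = (0, w0) := by simp [hΦdef, hG0]
  have hσ0 : σ w0 = p0 := by
    have := hΦT.localInverse_apply_image (f := Φ) (f' := T) (a := (p0, w0))
    rw [hΦ0] at this
    exact congrArg Prod.fst this
  -- the affine inclusion
  have hjsd : HasStrictFDerivAt (fun w : D => ((0 : P), w))
      (ContinuousLinearMap.inr ℝ P D) w0 := by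
    have := (hasStrictFDerivAt_const (𝕜 := ℝ) (0 : P) w0).prodMk (hasStrictFDerivAt_id w0)
    exact this
  have hjt : ContinuousAt (fun w : D => ((0 : P), w)) w0 :=
    hjsd.continuousAt
  -- right inverse eventually
  have hri : ∀ᶠ y in 𝓝 (0, w0), Φ (ℓ y) = y := by
    have := hΦT.eventually_right_inverse
    rw [hΦ0] at this
    exact this
  have hev1 : ∀ᶠ w in 𝓝 w0, Φ (ℓ (0, w)) = (0, w) := hjt.tendsto.eventually hri
  have hev2 : ∀ᶠ w in 𝓝 w0, ℓ (0, w) = (σ w, w) := by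
    filter_upwards [hev1] with w hw
    have h2 : (ℓ (0, w)).2 = w := congrArg Prod.snd hw
    rw [hσdef]
    exact Prod.ext rfl h2
  have hev3 : ∀ᶠ w in 𝓝 w0, G (σ w, w) = 0 := by
    filter_upwards [hev1, hev2] with w h1 h2
    rw [h2] at h1
    exact congrArg Prod.fst h1
  -- continuity of σ at w0
  have hℓcont : ContinuousAt ℓ (0, w0) := by
    have := hΦT.localInverse_continuousAt
    rw [hΦ0] at this
    exact this
  have hσcont : ContinuousAt σ w0 := by
    apply (continuous_fst.continuousAt).comp
    exact hℓcont.comp hjt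
  -- strict derivative of σ
  set σ' : D →L[ℝ] P := (ContinuousLinearMap.fst ℝ P D).comp
    (((T.symm : (P × D) →L[ℝ] (P × D))).comp (ContinuousLinearMap.inr ℝ P D)) with hσ'def
  have hℓsd : HasStrictFDerivAt ℓ ((T.symm : (P × D) →L[ℝ] (P × D))) (0, w0) := by
    have := hΦT.to_localInverse
    rw [hΦ0] at this
    exact this
  have hσsd : HasStrictFDerivAt σ σ' w0 := by
    have h1 : HasStrictFDerivAt (fun w : D => ℓ ((0 : P), w))
        (((T.symm : (P × D) →L[ℝ] (P × D))).comp (ContinuousLinearMap.inr ℝ P D)) w0 :=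
      hℓsd.comp w0 hjsd
    exact ((ContinuousLinearMap.fst ℝ P D).hasStrictFDerivAt).comp w0 h1
  have hσ'prop : ∀ u, DG (σ' u, u) = 0 := by
    intro u
    set z : P × D := T.symm (0, u) with hzdef
    have hz : DΦ z = (0, u) := by
      rw [← hTcoe]
      exact T.apply_symm_apply (0, u)
    have hz2 : z.2 = u := congrArg Prod.snd hz
    have hz1 : DG z = 0 := congrArg Prod.fst hz
    have hσ'u : σ' u = z.1 := rfl
    rw [hσ'u, ← hz2]
    exact hz1
  -- choose neighborhoods
  obtain ⟨U0, hU0, V0, hV0, hUV⟩ := mem_nhds_prod_iff.mp (ph.open_source.mem_nhds hsource)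
  have hev4 : ∀ᶠ w in 𝓝 w0, σ w ∈ U0 := hσcont (by rw [hσ0]; exact hU0)
  have hev5 : ∀ᶠ w in 𝓝 w0, (σ w, w) ∈ ph.source := by
    have : ∀ᶠ w in 𝓝 w0, ℓ (0, w) ∈ ph.source := by
      have htarget : ∀ᶠ y in 𝓝 ((0 : P), w0), y ∈ ph.target := by
        have := hΦT.image_mem_toOpenPartialHomeomorph_target
        rw [hΦ0] at this
        exact ph.open_target.eventually_mem this
      have := hjt.tendsto.eventually htarget
      filter_upwards [this] with w hw
      exact ph.map_target hw
    filter_upwards [this, hev2] with w h1 h2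
    rw [← h2]
    exact h1
  set V : Set D := V0 ∩ {w | G (σ w, w) = 0 ∧ σ w ∈ U0 ∧ (σ w, w) ∈ ph.source} with hVdef
  have hV : V ∈ 𝓝 w0 := by
    apply inter_mem hV0
    filter_upwards [hev3, hev4, hev5] with w h1 h2 h3
    exact ⟨h1, h2, h3⟩
  refine ⟨σ, σ', U0, V, hU0, hV, hσ0, hσsd, hσ'prop, ?_, ?_⟩
  · intro w hw
    exact hw.2.1
  · intro w hw p hp hGp
    have h1 : (p, w) ∈ ph.source := hUV (Set.mk_mem_prod hp hw.1)
    have h2 : (σ w, w) ∈ ph.source := hw.2.2.2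
    have h3 : Φ (p, w) = Φ (σ w, w) := by
      simp only [hΦdef, hGp, hw.2.1]
    have := ph.injOn h1 h2 (by rw [hphcoe]; exact h3)
    exact congrArg Prod.fst this

end implicit

section sign
variable {D : Type*} [NormedAddCommGroup D] [InnerProductSpace ℝ D]
-- two-point estimate from strict differentiability
lemma strict_two_point {φ : D → ℝ} {q : D →L[ℝ] ℝ} {w0 : D}
    (hφ : HasStrictFDerivAt φ q w0) {ε : ℝ} (hε : 0 < ε) :
    ∃ δ > 0, ∀ w ∈ ball w0 δ, ∀ p ∈ ball w0 δ,
      |φ w - φ p - q (w - p)| ≤ ε * ‖w - p‖ := by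
  have h := hφ.isLittleO.def hε
  rw [nhds_prod_eq, Filter.Eventually, Filter.mem_prod_same_iff] at h
  obtain ⟨s, hs, hsub⟩ := h
  obtain ⟨δ, hδ, hball⟩ := Metric.mem_nhds_iff.mp hs
  refine ⟨δ, hδ, fun w hw p hp => ?_⟩
  have := hsub (Set.mk_mem_prod (hball hw) (hball hp))
  simpa using this

private lemma sign_match_pos (φ ψ : D → ℝ) (w0 : D) (e : D) (k : ℝ) (he : e ≠ 0) (hk : 0 < k)
    (hφ : HasStrictFDerivAt φ (innerSL ℝ e) w0)
    (hψ : HasStrictFDerivAt ψ (k • innerSL ℝ e) w0)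
    (hφ0 : φ w0 = 0)
    (hzero : ∀ᶠ w in 𝓝 w0, φ w = 0 → ψ w = 0) :
    ∀ᶠ w in 𝓝 w0, 0 < φ w → 0 < ψ w := by
  have hne : (0:ℝ) < ‖e‖ := norm_pos_iff.mpr he
  set C₁ : ℝ := 2 / ‖e‖ with hC₁
  have hC₁pos : 0 < C₁ := by positivity
  set ε : ℝ := min (‖e‖ / 4) (k / (2 * C₁ * (k + 1))) with hε
  have hεpos : 0 < ε := by
    apply lt_min (by positivity)
    positivity
  have hε1 : ε ≤ ‖e‖ / 4 := min_le_left _ _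
  have hε2 : ε ≤ k / (2 * C₁ * (k + 1)) := min_le_right _ _
  obtain ⟨δ₁, hδ₁, hest₁⟩ := strict_two_point hφ hεpos
  obtain ⟨δ₂, hδ₂, hest₂⟩ := strict_two_point hψ hεpos
  obtain ⟨δ₃, hδ₃, hzero'⟩ : ∃ δ > 0, ∀ w ∈ ball w0 δ, φ w = 0 → ψ w = 0 := by
    obtain ⟨δ, hδ, h⟩ := Metric.mem_nhds_iff.mp hzero
    exact ⟨δ, hδ, fun w hw => h hw⟩
  set δ : ℝ := min δ₁ (min δ₂ δ₃) with hδdef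
  have hδpos : 0 < δ := lt_min hδ₁ (lt_min hδ₂ hδ₃)
  have hsub1 : ball w0 δ ⊆ ball w0 δ₁ := ball_subset_ball (min_le_left _ _)
  have hsub2 : ball w0 δ ⊆ ball w0 δ₂ := ball_subset_ball ((min_le_right _ _).trans (min_le_left _ _))
  have hsub3 : ball w0 δ ⊆ ball w0 δ₃ := ball_subset_ball ((min_le_right _ _).trans (min_le_right _ _))
  have hE1 : ∀ w ∈ ball w0 δ, ∀ p ∈ ball w0 δ,
      |φ w - φ p - (innerSL ℝ e) (w - p)| ≤ ε * ‖w - p‖ :=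
    fun w hw p hp => hest₁ w (hsub1 hw) p (hsub1 hp)
  have hE2 : ∀ w ∈ ball w0 δ, ∀ p ∈ ball w0 δ,
      |ψ w - ψ p - (k • innerSL ℝ e) (w - p)| ≤ ε * ‖w - p‖ :=
    fun w hw p hp => hest₂ w (hsub2 hw) p (hsub2 hp)
  -- Lipschitz-type bound for φ on ball w0 δ
  have hLip : ∀ w ∈ ball w0 δ, ∀ p ∈ ball w0 δ, |φ w - φ p| ≤ (‖e‖ + ε) * ‖w - p‖ := by
    intro w hw p hp
    have h1 := hE1 w hw p hp
    have h2 : |(innerSL ℝ e) (w - p)| ≤ ‖e‖ * ‖w - p‖ := by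
      simpa using abs_real_inner_le_norm e (w - p)
    have h3 : |φ w - φ p| ≤ |φ w - φ p - (innerSL ℝ e) (w - p)| + |(innerSL ℝ e) (w - p)| := by
      have := abs_add_le (φ w - φ p - (innerSL ℝ e) (w - p)) ((innerSL ℝ e) (w - p))
      simpa using this
    calc |φ w - φ p| ≤ ε * ‖w - p‖ + ‖e‖ * ‖w - p‖ := h3.trans (add_le_add h1 h2)
      _ = (‖e‖ + ε) * ‖w - p‖ := by ring
  set L : ℝ := ‖e‖ + ε with hLdef
  have hLpos : 0 < L := by positivity
  set r : ℝ := δ / (2 * (1 + C₁ * L)) with hrdef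
  have hrpos : 0 < r := by positivity
  have hrδ : r ≤ δ / 2 := by
    rw [hrdef, div_le_div_iff₀ (by positivity) (by norm_num)]
    nlinarith [hδpos, mul_pos hC₁pos hLpos]
  rw [Metric.eventually_nhds_iff_ball]
  refine ⟨r, hrpos, fun w hw hφw => ?_⟩
  have hwδ : w ∈ ball w0 δ := by
    rw [mem_ball] at hw ⊢
    calc dist w w0 < r := hw
      _ ≤ δ / 2 := hrδ
      _ < δ := by linarith
  have hw0δ : w0 ∈ ball w0 δ := mem_ball_self hδpos
  -- |φ w| ≤ L * ‖w - w0‖ < L * r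
  have hφbound : φ w ≤ L * r := by
    have := hLip w hwδ w0 hw0δ
    rw [hφ0, sub_zero] at this
    have h2 : ‖w - w0‖ < r := by rw [← dist_eq_norm]; exact hw
    calc φ w ≤ |φ w| := le_abs_self _
      _ ≤ L * ‖w - w0‖ := this
      _ ≤ L * r := by nlinarith
  -- the correction direction
  set uvec : D := -(2 * φ w / ‖e‖ ^ 2) • e with huvec
  have huvecnorm : ‖uvec‖ = C₁ * φ w := by
    rw [huvec, norm_smul, Real.norm_eq_abs, abs_neg,
      abs_of_pos (by positivity : (0:ℝ) < 2 * φ w / ‖e‖ ^ 2)]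
    rw [hC₁]
    field_simp
  have hpath : ∀ t ∈ Icc (0:ℝ) 1, w + t • uvec ∈ ball w0 δ := by
    intro t ht
    rw [mem_ball, dist_eq_norm]
    have : w + t • uvec - w0 = (w - w0) + t • uvec := by abel
    rw [this]
    have h1 : ‖(w - w0) + t • uvec‖ ≤ ‖w - w0‖ + ‖t • uvec‖ := norm_add_le _ _
    have h2 : ‖t • uvec‖ ≤ ‖uvec‖ := by
      rw [norm_smul, Real.norm_eq_abs, abs_of_nonneg ht.1]
      nlinarith [norm_nonneg uvec, ht.1, ht.2]
    have h3 : ‖w - w0‖ < r := by rw [← dist_eq_norm]; exact hw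
    have h4 : ‖uvec‖ ≤ C₁ * (L * r) := by rw [huvecnorm]; nlinarith
    calc ‖(w - w0) + t • uvec‖ ≤ ‖w - w0‖ + ‖uvec‖ := by linarith
      _ < r + C₁ * L * r := by nlinarith
      _ = r * (1 + C₁ * L) := by ring
      _ = δ / 2 := by rw [hrdef]; field_simp
      _ < δ := by linarith
  -- continuity of φ along the path
  have hφcont : ContinuousOn φ (ball w0 δ) := by
    have : LipschitzOnWith (Real.toNNReal L) φ (ball w0 δ) := by
      apply LipschitzOnWith.of_dist_le_mul
      intro x hx y hy
      rw [Real.dist_eq, dist_eq_norm]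
      calc |φ x - φ y| ≤ L * ‖x - y‖ := hLip x hx y hy
        _ ≤ Real.toNNReal L * ‖x - y‖ := by
            apply mul_le_mul_of_nonneg_right _ (norm_nonneg _)
            rw [Real.coe_toNNReal _ hLpos.le]
    exact this.continuousOn
  have hhcont : ContinuousOn (fun t : ℝ => φ (w + t • uvec)) (Icc 0 1) := by
    apply hφcont.comp _ hpath
    fun_prop
  -- endpoint estimate : φ (w + uvec) ≤ -φ w / 2
  have huvecball : w + uvec ∈ ball w0 δ := by
    have := hpath 1 (by norm_num)
    simpa using this
  have hεC₁ : ε * C₁ ≤ 1 / 2 := by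
    have : ε * C₁ ≤ (‖e‖ / 4) * (2 / ‖e‖) := by
      apply mul_le_mul hε1 (le_refl _) (by positivity) (by positivity)
    calc ε * C₁ ≤ (‖e‖ / 4) * (2 / ‖e‖) := this
      _ = 1 / 2 := by field_simp; ring
  have hend : φ (w + uvec) ≤ -(φ w) / 2 := by
    have h1 := hE1 (w + uvec) huvecball w hwδ
    have h2 : (w + uvec) - w = uvec := by abel
    rw [h2] at h1
    have h3 : (innerSL ℝ e) uvec = -(2 * φ w) := by
      rw [huvec, map_smul]
      have : (innerSL ℝ e) e = ‖e‖ ^ 2 := by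
        simp [real_inner_self_eq_norm_sq]
      rw [smul_eq_mul, this]
      field_simp
    rw [h3, huvecnorm] at h1
    have h4 := (abs_le.mp h1).2
    nlinarith [hεC₁, hφw]
  -- IVT: find zero of φ along the path
  have hmem : (0:ℝ) ∈ Icc (φ (w + (1:ℝ) • uvec)) (φ (w + (0:ℝ) • uvec)) := by
    constructor
    · simp only [one_smul]
      nlinarith [hend, hφw]
    · simp only [zero_smul, add_zero]
      exact hφw.le
  obtain ⟨ts, hts, htseq⟩ := intermediate_value_Icc' (zero_le_one) hhcont hmem
  set p : D := w + ts • uvec with hpdef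
  have hpball : p ∈ ball w0 δ := hpath ts hts
  have hφp : φ p = 0 := htseq
  have hψp : ψ p = 0 := hzero' p (hsub3 hpball) hφp
  have hwp : ‖w - p‖ ≤ C₁ * φ w := by
    have : w - p = (-ts) • uvec := by rw [hpdef]; module
    rw [this, norm_smul, Real.norm_eq_abs, abs_neg, abs_of_nonneg hts.1, huvecnorm]
    nlinarith [hts.1, hts.2, mul_pos hC₁pos hφw]
  -- final estimates
  set a : ℝ := (innerSL ℝ e) (w - p) with hadef
  have hA := hE1 w hwδ p hpball
  have hB := hE2 w hwδ p hpball
  rw [hφp, sub_zero, ← hadef] at hA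
  rw [hψp, sub_zero] at hB
  have hka : (k • innerSL ℝ e) (w - p) = k * a := by
    rw [hadef]; simp
  rw [hka] at hB
  have h5 : ε * ‖w - p‖ ≤ ε * (C₁ * φ w) := mul_le_mul_of_nonneg_left hwp hεpos.le
  have h6 : φ w - a ≤ ε * (C₁ * φ w) := le_trans (abs_le.mp hA).2 h5
  have h7 : -(ε * (C₁ * φ w)) ≤ ψ w - k * a := le_trans (neg_le_neg h5) (abs_le.mp hB).1
  have h8 : ε * (2 * C₁ * (k + 1)) ≤ k := by
    rw [← le_div_iff₀ (by positivity)]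
    exact hε2
  nlinarith [hk, hφw, h6, h7, h8, hεC₁]

lemma sign_match (φ ψ : D → ℝ) (w0 : D) (e : D) (k : ℝ) (he : e ≠ 0) (hk : 0 < k)
    (hφ : HasStrictFDerivAt φ (innerSL ℝ e) w0)
    (hψ : HasStrictFDerivAt ψ (k • innerSL ℝ e) w0)
    (hφ0 : φ w0 = 0)
    (hzero : ∀ᶠ w in 𝓝 w0, φ w = 0 → ψ w = 0) :
    ∀ᶠ w in 𝓝 w0, (0 < φ w → 0 < ψ w) ∧ (φ w < 0 → ψ w < 0) := by
  have h1 := sign_match_pos φ ψ w0 e k he hk hφ hψ hφ0 hzero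
  have hnegSL : innerSL ℝ (-e) = -(innerSL ℝ e) := by
    ext u; simp
  have h2 : ∀ᶠ w in 𝓝 w0, 0 < -φ w → 0 < -ψ w := by
    apply sign_match_pos (fun w => -φ w) (fun w => -ψ w) w0 (-e) k (by simpa using he) hk
    · rw [hnegSL]; exact hφ.neg
    · have : k • innerSL ℝ (-e) = -(k • innerSL ℝ e) := by rw [hnegSL]; module
      rw [this]; exact hψ.neg
    · simpa using hφ0
    · filter_upwards [hzero] with w hw h
      have : φ w = 0 := by linarith [neg_eq_zero.mp h]
      simp [hw this]
  filter_upwards [h1, h2] with w hw1 hw2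
  exact ⟨hw1, fun h => by have := hw2 (by linarith); linarith⟩

end sign


open RealInnerProductSpace in
/-- Degenerate case `λ = 0`: under the kernel conditions (1)–(3) on
`A'₁(v,γ) = ∇²ₓₓf₀ v + γ∇ₓF` and `A'₂(v,γ) = ∇²_{wx}f₀ v + γ∇_wF`, the map `S` has
a Lipschitz continuous single-valued localization around `w0` for `x0`. -/
theorem stmt11 {n d : ℕ} (f₀ F : En n × En d → ℝ)
    (hf₀ : ContDiff ℝ 2 f₀) (hF : ContDiff ℝ 2 F)
    (x0 : En n) (w0 : En d)
    (hFeq : F (x0, w0) = 0)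
    (hgF : gradx F x0 w0 ≠ 0)
    (hstat : gradx f₀ x0 w0 = 0)
    (h1 : ∀ (v : En n) (γ : ℝ),
      hessxx f₀ x0 w0 v + γ • gradx F x0 w0 = 0 →
      mixwx f₀ x0 w0 v + γ • gradw F x0 w0 = 0 → v = 0 ∧ γ = 0)
    (h2 : ∀ (v : En n) (γ : ℝ),
      hessxx f₀ x0 w0 v + γ • gradx F x0 w0 = 0 →
      ⟪gradx F x0 w0, v⟫ = 0 →
      mixwx f₀ x0 w0 v + γ • gradw F x0 w0 = 0)
    (h3 : ∀ (v : En n) (γ : ℝ),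
      hessxx f₀ x0 w0 v + γ • gradx F x0 w0 = 0 →
      0 < ⟪gradx F x0 w0, v⟫ → 0 ≤ γ →
      mixwx f₀ x0 w0 v + γ • gradw F x0 w0 = 0) :
    HasLipschitzLocalization (Sgen f₀ F) w0 x0 := by
  classical
  set g : En n := gradx F x0 w0 with hgdef
  set c : En d := gradw F x0 w0 with hcdef
  set Hm : En n →L[ℝ] En n := hessxx f₀ x0 w0 with hHmdef
  set Mm : En n →L[ℝ] En d := mixwx f₀ x0 w0 with hMmdef
  set G₀ : En n × En d → En n := fun p => gradx f₀ p.1 p.2 with hG₀def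
  set GF : En n × En d → En n := fun p => gradx F p.1 p.2 with hGFdef
  have hf₀d : Differentiable ℝ f₀ := hf₀.differentiable (by norm_num)
  have hFd : Differentiable ℝ F := hF.differentiable (by norm_num)
  have hG₀cd : ContDiff ℝ 1 G₀ := contDiff_gradx f₀ hf₀
  have hGFcd : ContDiff ℝ 1 GF := contDiff_gradx F hF
  set A : En n × En d →L[ℝ] En n := fderiv ℝ G₀ (x0, w0) with hAdef
  set df : En n × En d →L[ℝ] ℝ := fderiv ℝ F (x0, w0) with hdfdef
  have hAsd : HasStrictFDerivAt G₀ A (x0, w0) :=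
    (hG₀cd.contDiffAt).hasStrictFDerivAt one_ne_zero
  have hdfsd : HasStrictFDerivAt F df (x0, w0) :=
    (hF.contDiffAt).hasStrictFDerivAt (by norm_num)
  have hGFsd : HasStrictFDerivAt GF (fderiv ℝ GF (x0, w0)) (x0, w0) :=
    (hGFcd.contDiffAt).hasStrictFDerivAt one_ne_zero
  -- partial derivative identities
  have hHA : ∀ v : En n, A (v, 0) = Hm v := by
    intro v
    have hA1 : HasFDerivAt (fun y : En n => G₀ (y, w0))
        (A.comp (ContinuousLinearMap.inl ℝ (En n) (En d))) x0 :=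
      by have := (hAsd.hasFDerivAt).comp x0 (hasFDerivAt_mk_left w0 x0); exact this
    have h2' : Hm = A.comp (ContinuousLinearMap.inl ℝ (En n) (En d)) := by
      rw [hHmdef]
      unfold hessxx
      exact hA1.fderiv
    rw [h2']
    rfl
  set Bm : En d →L[ℝ] En n := A.comp (ContinuousLinearMap.inr ℝ (En n) (En d)) with hBmdef
  have hBm' : fderiv ℝ (fun w => gradx f₀ x0 w) w0 = Bm := by
    have hA1 : HasFDerivAt (fun u : En d => G₀ (x0, u))
        (A.comp (ContinuousLinearMap.inr ℝ (En n) (En d))) w0 :=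
      (hAsd.hasFDerivAt).comp w0 (hasFDerivAt_mk_right x0 w0)
    rw [hBmdef]
    exact hA1.fderiv
  have hBA : ∀ u : En d, A (0, u) = Bm u := fun u => rfl
  have hAvu : ∀ (v : En n) (u : En d), A (v, u) = Hm v + Bm u := by
    intro v u
    have hsplit : ((v, u) : En n × En d) = (v, 0) + (0, u) := by simp
    rw [hsplit, map_add, hHA, hBA]
  have hMB : ∀ (v : En n) (u : En d), ⟪Mm v, u⟫ = ⟪v, Bm u⟫ := by
    intro v u
    have : Mm = ContinuousLinearMap.adjoint Bm := by
      rw [hMmdef]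
      unfold mixwx
      rw [hBm']
    rw [this]
    exact ContinuousLinearMap.adjoint_inner_left Bm u v
  have hdfx : ∀ v : En n, df (v, 0) = ⟪g, v⟫ := by
    intro v
    rw [hgdef]
    exact (inner_gradx F hFd x0 w0 v).symm
  have hdfw : ∀ u : En d, df (0, u) = ⟪c, u⟫ := by
    intro u
    rw [hcdef]
    exact (inner_gradw F hFd x0 w0 u).symm
  have hdfvu : ∀ (v : En n) (u : En d), df (v, u) = ⟪g, v⟫ + ⟪c, u⟫ := by
    intro v u
    have hsplit : ((v, u) : En n × En d) = (v, 0) + (0, u) := by simp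
    rw [hsplit, map_add, hdfx, hdfw]
  have hsym : ∀ v v' : En n, ⟪Hm v, v'⟫ = ⟪v, Hm v'⟫ := hess_symm f₀ hf₀ x0 w0
  -- Linear algebra: H is injective
  have hHinj : ∀ v : En n, Hm v = 0 → v = 0 := by
    intro v hv
    have h0 : Hm v + (0 : ℝ) • g = 0 := by rw [hv]; simp
    rcases lt_trichotomy (⟪g, v⟫ : ℝ) 0 with h | h | h
    · have h0' : Hm (-v) + (0 : ℝ) • g = 0 := by rw [map_neg, hv]; simp
      have h3' := h3 (-v) 0 h0' (by rw [inner_neg_right]; linarith) le_rfl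
      have := (h1 (-v) 0 h0' h3').1
      simpa [neg_eq_zero] using this
    · exact (h1 v 0 h0 (h2 v 0 h0 h)).1
    · exact (h1 v 0 h0 (h3 v 0 h0 h le_rfl)).1
  have hHsurj : Function.Surjective Hm := by
    have hinj : Function.Injective Hm := by
      intro a b hab
      have : Hm (a - b) = 0 := by rw [map_sub, hab, sub_self]
      have := hHinj _ this
      exact sub_eq_zero.mp this
    exact (LinearMap.injective_iff_surjective (f := (Hm : En n →ₗ[ℝ] En n))).mp hinj
  obtain ⟨vh, hvh⟩ := hHsurj g
  set κ : ℝ := ⟪g, vh⟫ with hκdef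
  have hker : Hm vh + (-1 : ℝ) • g = 0 := by rw [hvh]; simp
  have hκpos : 0 < κ := by
    rcases lt_trichotomy κ 0 with h | h | h
    · have hk2 : Hm (-vh) + (1 : ℝ) • g = 0 := by rw [map_neg, hvh]; simp
      have h3' := h3 (-vh) 1 hk2 (by rw [inner_neg_right]; rw [hκdef] at h; linarith)
        zero_le_one
      have := (h1 (-vh) 1 hk2 h3').2
      norm_num at this
    · have h2' := h2 vh (-1) hker (by rw [hκdef] at h; exact h)
      have := (h1 vh (-1) hker h2').2
      norm_num at this
    · exact h
  set evec : En d := c - Mm vh with hevecdef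
  have hevec : evec ≠ 0 := by
    intro h0
    have hMc : Mm vh + (-1 : ℝ) • c = 0 := by
      have : Mm vh = c := by
        have := sub_eq_zero.mp ((hevecdef ▸ h0 : c - Mm vh = 0))
        exact this.symm
      rw [this]; simp
    have := (h1 vh (-1) hker hMc).2
    norm_num at this
  -- Branch A
  have hinjA : ∀ v : En n, A (v, 0) = 0 → v = 0 := by
    intro v hv
    exact hHinj v (by rw [← hHA v]; exact hv)
  obtain ⟨σA, σA', UA, VA, hUA, hVA, hσA0, hσAsd, hσA'p, hσAid, hσAuniq⟩ :=
    implicit_branch G₀ x0 w0 A hAsd hstat hinjA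
  -- Branch B : the system (∇ₓf₀ + μ∇ₓF, F) = 0 in (x,μ)
  set q0 : (En n × ℝ) × En d := ((x0, 0), w0) with hq0def
  set GB : (En n × ℝ) × En d → En n × ℝ :=
    fun q => (G₀ (q.1.1, q.2) + q.1.2 • GF (q.1.1, q.2), F (q.1.1, q.2)) with hGBdef
  set pr1 : ((En n × ℝ) × En d) →L[ℝ] En n :=
    (ContinuousLinearMap.fst ℝ (En n) ℝ).comp
      (ContinuousLinearMap.fst ℝ (En n × ℝ) (En d)) with hpr1def
  set prm : ((En n × ℝ) × En d) →L[ℝ] ℝ :=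
    (ContinuousLinearMap.snd ℝ (En n) ℝ).comp
      (ContinuousLinearMap.fst ℝ (En n × ℝ) (En d)) with hprmdef
  set prw : ((En n × ℝ) × En d) →L[ℝ] En d :=
    ContinuousLinearMap.snd ℝ (En n × ℝ) (En d) with hprwdef
  set rmap : ((En n × ℝ) × En d) →L[ℝ] (En n × En d) := pr1.prod prw with hrmapdef
  set DGB : ((En n × ℝ) × En d) →L[ℝ] (En n × ℝ) :=
    ((A.comp rmap) + prm.smulRight g).prod (df.comp rmap) with hDGBdef
  have hrmapsd : HasStrictFDerivAt
      (fun q : (En n × ℝ) × En d => ((q.1.1 : En n), (q.2 : En d))) rmap q0 :=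
    rmap.hasStrictFDerivAt
  have hg1 : HasStrictFDerivAt (fun q : (En n × ℝ) × En d => G₀ (q.1.1, q.2))
      (A.comp rmap) q0 := HasStrictFDerivAt.comp q0 hAsd hrmapsd
  have hgμ : HasStrictFDerivAt (fun q : (En n × ℝ) × En d => (q.1.2 : ℝ)) prm q0 :=
    prm.hasStrictFDerivAt
  have hg2 : HasStrictFDerivAt (fun q : (En n × ℝ) × En d => GF (q.1.1, q.2))
      ((fderiv ℝ GF (x0, w0)).comp rmap) q0 := HasStrictFDerivAt.comp q0 hGFsd hrmapsd
  have hg3 : HasStrictFDerivAt (fun q : (En n × ℝ) × En d => q.1.2 • GF (q.1.1, q.2))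
      (prm.smulRight g) q0 := by
    have hs := hgμ.smul hg2
    have h0 : (q0.1.2 : ℝ) = 0 := rfl
    rw [h0, zero_smul, zero_add] at hs
    exact hs
  have hg4 : HasStrictFDerivAt (fun q : (En n × ℝ) × En d => F (q.1.1, q.2))
      (df.comp rmap) q0 := HasStrictFDerivAt.comp q0 hdfsd hrmapsd
  have hGBsd : HasStrictFDerivAt GB DGB q0 := (hg1.add hg3).prodMk hg4
  have hGB0 : GB q0 = 0 := by
    have e1 : G₀ (x0, w0) + (0 : ℝ) • GF (x0, w0) = 0 := by
      rw [zero_smul, add_zero]; exact hstat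
    show (G₀ (x0, w0) + (0 : ℝ) • GF (x0, w0), F (x0, w0)) = 0
    rw [e1, hFeq]
    rfl
  have hDGBapp : ∀ (v : En n) (γ : ℝ) (u : En d),
      DGB ((v, γ), u) = (A (v, u) + γ • g, df (v, u)) := by
    intro v γ u
    simp [hDGBdef, hrmapdef, hpr1def, hprmdef, hprwdef,
      ContinuousLinearMap.prod_apply, ContinuousLinearMap.add_apply,
      ContinuousLinearMap.comp_apply, ContinuousLinearMap.smulRight_apply]
  have hinjB : ∀ p : En n × ℝ, DGB (p, 0) = 0 → p = 0 := by
    rintro ⟨v, γ⟩ hp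
    rw [hDGBapp v γ 0] at hp
    have hp1 : A (v, 0) + γ • g = 0 := congrArg Prod.fst hp
    have hp2 : df (v, 0) = 0 := congrArg Prod.snd hp
    have hb1 : Hm v + γ • g = 0 := by rw [← hHA v]; exact hp1
    have hb2 : ⟪g, v⟫ = 0 := by rw [← hdfx v]; exact hp2
    obtain ⟨hv0, hγ0⟩ := h1 v γ hb1 (h2 v γ hb1 hb2)
    rw [hv0, hγ0]
    rfl
  obtain ⟨σB, σB', UB, VB, hUB, hVB, hσB0, hσBsd, hσB'p, hσBid, hσBuniq⟩ :=
    implicit_branch GB (x0, 0) w0 DGB hGBsd hGB0 hinjB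
  set xB : En d → En n := fun w => (σB w).1 with hxBdef
  set ψ : En d → ℝ := fun w => (σB w).2 with hψdef
  have hσBeq : ∀ w ∈ VB, G₀ (xB w, w) + ψ w • GF (xB w, w) = 0 ∧ F (xB w, w) = 0 := by
    intro w hw
    have := hσBid w hw
    exact ⟨congrArg Prod.fst this, congrArg Prod.snd this⟩
  -- the two scalar functions φ and ψ
  set φ : En d → ℝ := fun w => F (σA w, w) with hφdef
  have hφ0 : φ w0 = 0 := by
    show F (σA w0, w0) = 0
    rw [hσA0]; exact hFeq
  have hdf' : HasStrictFDerivAt F df (σA w0, w0) := by rw [hσA0]; exact hdfsd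
  have hφsd0 : HasStrictFDerivAt φ
      (df.comp (σA'.prod (ContinuousLinearMap.id ℝ (En d)))) w0 :=
    HasStrictFDerivAt.comp w0 hdf' (hσAsd.prodMk (hasStrictFDerivAt_id w0))
  have hAσ : ∀ u, Hm (σA' u) = -(Bm u) := by
    intro u
    have h := hσA'p u
    rw [hAvu] at h
    exact eq_neg_of_add_eq_zero_left h
  have hdφu : ∀ u, df (σA' u, u) = ⟪evec, u⟫ := by
    intro u
    rw [hdfvu]
    have e1 : ⟪g, σA' u⟫ = -⟪Mm vh, u⟫ := by
      calc ⟪g, σA' u⟫ = ⟪Hm vh, σA' u⟫ := by rw [hvh]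
        _ = ⟪vh, Hm (σA' u)⟫ := hsym vh (σA' u)
        _ = ⟪vh, -(Bm u)⟫ := by rw [hAσ u]
        _ = -⟪vh, Bm u⟫ := by rw [inner_neg_right]
        _ = -⟪Mm vh, u⟫ := by rw [hMB vh u]
    rw [e1, hevecdef, inner_sub_left]
    ring
  have hφsd : HasStrictFDerivAt φ (innerSL ℝ evec) w0 := by
    have hCLM : df.comp (σA'.prod (ContinuousLinearMap.id ℝ (En d))) = innerSL ℝ evec := by
      ext u
      simp only [ContinuousLinearMap.comp_apply, ContinuousLinearMap.prod_apply,
        ContinuousLinearMap.coe_id', id_eq, innerSL_apply_apply]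
      exact hdφu u
    rw [← hCLM]
    exact hφsd0
  -- strict derivative of ψ
  have hψsd0 : HasStrictFDerivAt ψ ((ContinuousLinearMap.snd ℝ (En n) ℝ).comp σB') w0 :=
    HasStrictFDerivAt.comp w0 ((ContinuousLinearMap.snd ℝ (En n) ℝ).hasStrictFDerivAt) hσBsd
  have hψ'u : ∀ u, (σB' u).2 = κ⁻¹ * ⟪evec, u⟫ := by
    intro u
    have h := hσB'p u
    have h' : (A ((σB' u).1, u) + (σB' u).2 • g, df ((σB' u).1, u)) = 0 := by
      rw [← hDGBapp]
      exact h
    have eq1 : Hm ((σB' u).1) + Bm u + (σB' u).2 • g = 0 := by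
      have := congrArg Prod.fst h'
      rw [hAvu] at this
      exact this
    have eq2 : ⟪g, (σB' u).1⟫ + ⟪c, u⟫ = 0 := by
      have := congrArg Prod.snd h'
      rw [hdfvu] at this
      exact this
    have e3 : ⟪Hm ((σB' u).1) + Bm u + (σB' u).2 • g, vh⟫ = 0 := by
      rw [eq1, inner_zero_left]
    rw [inner_add_left, inner_add_left, real_inner_smul_left] at e3
    have e4 : ⟪Hm ((σB' u).1), vh⟫ = -⟪c, u⟫ := by
      calc ⟪Hm ((σB' u).1), vh⟫ = ⟪(σB' u).1, Hm vh⟫ := hsym _ vh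
        _ = ⟪(σB' u).1, g⟫ := by rw [hvh]
        _ = ⟪g, (σB' u).1⟫ := (real_inner_comm (σB' u).1 g).symm
        _ = -⟪c, u⟫ := by linarith [eq2]
    have e5 : ⟪Bm u, vh⟫ = ⟪Mm vh, u⟫ := by
      rw [real_inner_comm]
      exact (hMB vh u).symm
    have e6 : ⟪g, vh⟫ = κ := rfl
    rw [e4, e5, e6] at e3
    have hκne : κ ≠ 0 := ne_of_gt hκpos
    rw [hevecdef, inner_sub_left, eq_inv_mul_iff_mul_eq₀ hκne]
    linear_combination e3
  have hψsd : HasStrictFDerivAt ψ (κ⁻¹ • innerSL ℝ evec) w0 := by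
    have hCLM : (ContinuousLinearMap.snd ℝ (En n) ℝ).comp σB' = κ⁻¹ • innerSL ℝ evec := by
      ext u
      simp only [ContinuousLinearMap.comp_apply, ContinuousLinearMap.coe_snd',
        ContinuousLinearMap.smul_apply, innerSL_apply_apply, smul_eq_mul]
      exact hψ'u u
    rw [← hCLM]
    exact hψsd0
  -- zero link : φ w = 0 forces the two branches to coincide
  have hσAtend : Tendsto σA (𝓝 w0) (𝓝 x0) := by
    have := hσAsd.continuousAt
    rw [ContinuousAt, hσA0] at this
    exact this
  have hσBtend : Tendsto σB (𝓝 w0) (𝓝 (x0, 0)) := by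
    have := hσBsd.continuousAt
    rw [ContinuousAt, hσB0] at this
    exact this
  have hZ1 : ∀ᶠ w in 𝓝 w0, (φ w = 0 → σB w = (σA w, 0)) := by
    have htend : Tendsto (fun w => ((σA w, (0 : ℝ)) : En n × ℝ)) (𝓝 w0) (𝓝 (x0, 0)) :=
      hσAtend.prodMk_nhds tendsto_const_nhds
    have hmemUB : ∀ᶠ w in 𝓝 w0, ((σA w, (0 : ℝ)) : En n × ℝ) ∈ UB := htend hUB
    filter_upwards [hVA, hVB, hmemUB] with w hwA hwB hwU hφw
    have hGBA : GB ((σA w, 0), w) = 0 := by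
      show (G₀ (σA w, w) + (0 : ℝ) • GF (σA w, w), F (σA w, w)) = 0
      have hFσ : F (σA w, w) = 0 := hφw
      rw [hσAid w hwA, zero_smul, add_zero, hFσ]
      rfl
    exact (hσBuniq w hwB (σA w, 0) hwU hGBA).symm
  have hZ1ψ : ∀ᶠ w in 𝓝 w0, (φ w = 0 → ψ w = 0) := by
    filter_upwards [hZ1] with w hw hφw
    show (σB w).2 = 0
    rw [hw hφw]
  have hsigns : ∀ᶠ w in 𝓝 w0, (0 < φ w → 0 < ψ w) ∧ (φ w < 0 → ψ w < 0) :=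
    sign_match φ ψ w0 evec κ⁻¹ hevec (inv_pos.mpr hκpos) hφsd hψsd hφ0 hZ1ψ
  -- identification of gradx with G₀/GF
  have hGxeq : ∀ (x : En n) (w : En d), gradx f₀ x w = G₀ (x, w) := fun _ _ => rfl
  have hGFeq : ∀ (x : En n) (w : En d), gradx F x w = GF (x, w) := fun _ _ => rfl
  -- radii
  obtain ⟨ρA, hρApos, hρA⟩ := Metric.mem_nhds_iff.mp hUA
  obtain ⟨ρB, hρBpos, hρB⟩ := Metric.mem_nhds_iff.mp hUB
  have hgpos : (0 : ℝ) < ‖g‖ := norm_pos_iff.mpr hgF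
  have hG₀cont : Continuous G₀ := hG₀cd.continuous
  have hGFcont : Continuous GF := hGFcd.continuous
  have ht1 : Tendsto (fun p => ‖G₀ p‖) (𝓝 (x0, w0)) (𝓝 0) := by
    have h0 : ‖G₀ (x0, w0)‖ = 0 := by
      show ‖gradx f₀ x0 w0‖ = 0
      rw [hstat, norm_zero]
    have hco := (hG₀cont.norm).continuousAt (x := (x0, w0))
    rw [ContinuousAt, h0] at hco
    exact hco
  have ht2 : Tendsto (fun p => ‖GF p - g‖) (𝓝 (x0, w0)) (𝓝 0) := by
    have h0 : ‖GF (x0, w0) - g‖ = 0 := by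
      show ‖gradx F x0 w0 - g‖ = 0
      rw [← hgdef, sub_self, norm_zero]
    have hsubc : Continuous (fun p : En n × En d => GF p - g) := hGFcont.sub continuous_const
    have hco := (hsubc.norm).continuousAt (x := (x0, w0))
    rw [ContinuousAt, h0] at hco
    exact hco
  have hballbound : ∀ᶠ p : En n × En d in 𝓝 (x0, w0),
      ‖G₀ p‖ < ρB * ‖g‖ / 4 ∧ ‖GF p - g‖ < ‖g‖ / 2 :=
    (ht1.eventually_lt_const (by positivity)).and (ht2.eventually_lt_const (by positivity))
  obtain ⟨ρ', hρ'pos, hρ'⟩ := Metric.eventually_nhds_iff_ball.mp hballbound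
  set ρ : ℝ := min ρA (min ρB ρ') with hρdef
  have hρpos : 0 < ρ := lt_min hρApos (lt_min hρBpos hρ'pos)
  have hρ_A : ρ ≤ ρA := min_le_left _ _
  have hρ_B : ρ ≤ ρB := (min_le_right _ _).trans (min_le_left _ _)
  have hρ_p : ρ ≤ ρ' := (min_le_right _ _).trans (min_le_right _ _)
  -- Lipschitz neighborhoods
  obtain ⟨KA, tA, htA, hlipA⟩ := hσAsd.exists_lipschitzOnWith
  obtain ⟨KB, tB, htB, hlipB⟩ := hσBsd.exists_lipschitzOnWith
  have hxBtend : Tendsto xB (𝓝 w0) (𝓝 x0) :=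
    (continuous_fst.tendsto ((x0, 0) : En n × ℝ)).comp hσBtend
  have hbig : ∀ᶠ w in 𝓝 w0,
      w ∈ VA ∧ w ∈ VB ∧ (φ w = 0 → σB w = (σA w, 0)) ∧
      ((0 < φ w → 0 < ψ w) ∧ (φ w < 0 → ψ w < 0)) ∧
      w ∈ tA ∧ w ∈ tB ∧ σA w ∈ ball x0 ρ ∧ xB w ∈ ball x0 ρ := by
    filter_upwards [hVA, hVB, hZ1, hsigns, htA, htB,
      hσAtend (ball_mem_nhds x0 hρpos), hxBtend (ball_mem_nhds x0 hρpos)] with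
      w a1 a2 a3 a4 a5 a6 a7 a8
    exact ⟨a1, a2, a3, a4, a5, a6, a7, a8⟩
  obtain ⟨r0, hr0pos, hr0⟩ := Metric.eventually_nhds_iff_ball.mp hbig
  set r : ℝ := min r0 ρ' with hrdef
  have hrpos : 0 < r := lt_min hr0pos hρ'pos
  set V : Set (En d) := ball w0 r with hVdef
  set U : Set (En n) := ball x0 ρ with hUdef
  have hprops : ∀ w ∈ V, w ∈ VA ∧ w ∈ VB ∧ (φ w = 0 → σB w = (σA w, 0)) ∧
      ((0 < φ w → 0 < ψ w) ∧ (φ w < 0 → ψ w < 0)) ∧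
      w ∈ tA ∧ w ∈ tB ∧ σA w ∈ ball x0 ρ ∧ xB w ∈ ball x0 ρ :=
    fun w hw => hr0 w (ball_subset_ball (min_le_left _ _) hw)
  have hpair : ∀ x ∈ U, ∀ w ∈ V,
      ‖G₀ (x, w)‖ < ρB * ‖g‖ / 4 ∧ ‖GF (x, w) - g‖ < ‖g‖ / 2 := by
    intro x hx w hw
    apply hρ'
    rw [mem_ball]
    have hd : dist ((x, w) : En n × En d) (x0, w0) = max (dist x x0) (dist w w0) :=
      Prod.dist_eq
    rw [hd]
    apply max_lt
    · exact lt_of_lt_of_le (mem_ball.mp hx) hρ_p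
    · exact lt_of_lt_of_le (mem_ball.mp hw) (min_le_right _ _)
  -- the localization map
  set s : En d → En n := fun w => if 0 < φ w then xB w else σA w with hsdef
  have hs0 : s w0 = x0 := by
    have : ¬ 0 < φ w0 := by rw [hφ0]; exact lt_irrefl 0
    show (if 0 < φ w0 then xB w0 else σA w0) = x0
    rw [if_neg this]
    exact hσA0
  set K : NNReal := max KA KB with hKdef
  have hKA : (KA : ℝ) ≤ (K : ℝ) := by
    rw [hKdef]; exact_mod_cast le_max_left KA KB
  have hKB : (KB : ℝ) ≤ (K : ℝ) := by
    rw [hKdef]; exact_mod_cast le_max_right KA KB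
  have hdistA : ∀ w₁ ∈ V, ∀ w₂ ∈ V, dist (σA w₁) (σA w₂) ≤ (KA : ℝ) * dist w₁ w₂ :=
    fun w₁ hw₁ w₂ hw₂ => hlipA.dist_le_mul w₁ (hprops w₁ hw₁).2.2.2.2.1
      w₂ (hprops w₂ hw₂).2.2.2.2.1
  have hdistB : ∀ w₁ ∈ V, ∀ w₂ ∈ V, dist (xB w₁) (xB w₂) ≤ (KB : ℝ) * dist w₁ w₂ := by
    intro w₁ hw₁ w₂ hw₂
    have h1 : dist (xB w₁) (xB w₂) ≤ dist (σB w₁) (σB w₂) := by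
      have : dist (σB w₁) (σB w₂) = max (dist (σB w₁).1 (σB w₂).1)
          (dist (σB w₁).2 (σB w₂).2) := Prod.dist_eq
      rw [this]
      exact le_max_left _ _
    exact h1.trans (hlipB.dist_le_mul w₁ (hprops w₁ hw₁).2.2.2.2.2.1
      w₂ (hprops w₂ hw₂).2.2.2.2.2.1)
  -- continuity of φ on V
  have hφcontV : ContinuousOn φ V := by
    have hσAcontV : ContinuousOn σA V :=
      (hlipA.continuousOn).mono (fun w hw => (hprops w hw).2.2.2.2.1)
    exact (hF.continuous).comp_continuousOn (hσAcontV.prodMk continuousOn_id)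
  -- mixed-case Lipschitz estimate
  have hmixed : ∀ w₁ ∈ V, ∀ w₂ ∈ V, ¬ 0 < φ w₁ → 0 < φ w₂ →
      dist (s w₁) (s w₂) ≤ (K : ℝ) * dist w₁ w₂ := by
    intro w₁ hw₁ w₂ hw₂ hneg hpos
    set θ : ℝ → En d := fun t => w₁ + t • (w₂ - w₁) with hθdef
    have hmaps : ∀ t ∈ Icc (0 : ℝ) 1, θ t ∈ segment ℝ w₁ w₂ := by
      intro t ht
      refine ⟨1 - t, t, by linarith [ht.2], ht.1, by ring, ?_⟩
      show (1 - t) • w₁ + t • w₂ = w₁ + t • (w₂ - w₁)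
      module
    have hsegV : segment ℝ w₁ w₂ ⊆ V := (convex_ball w0 r).segment_subset hw₁ hw₂
    have hθcont : ContinuousOn (fun t => φ (θ t)) (Icc (0 : ℝ) 1) := by
      apply hφcontV.comp
      · fun_prop
      · intro t ht
        exact hsegV (hmaps t ht)
    have hθ0 : θ 0 = w₁ := by
      show w₁ + (0 : ℝ) • (w₂ - w₁) = w₁
      module
    have hθ1 : θ 1 = w₂ := by
      show w₁ + (1 : ℝ) • (w₂ - w₁) = w₂
      module
    have hIcc : (0 : ℝ) ∈ Icc (φ (θ 0)) (φ (θ 1)) := by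
      rw [hθ0, hθ1]
      exact ⟨not_lt.mp hneg, hpos.le⟩
    obtain ⟨ts, hts, htseq⟩ := intermediate_value_Icc zero_le_one hθcont hIcc
    have hwsV : θ ts ∈ V := hsegV (hmaps ts hts)
    have hwsseg : θ ts ∈ segment ℝ w₁ w₂ := hmaps ts hts
    have hxeq : xB (θ ts) = σA (θ ts) := by
      have h := (hprops (θ ts) hwsV).2.2.1 htseq
      show (σB (θ ts)).1 = σA (θ ts)
      rw [h]
    have hs₁ : s w₁ = σA w₁ := if_neg hneg
    have hs₂ : s w₂ = xB w₂ := if_pos hpos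
    have e1 : dist (s w₁) (s w₂) ≤ dist (σA w₁) (σA (θ ts)) + dist (xB (θ ts)) (xB w₂) := by
      rw [hs₁, hs₂]
      calc dist (σA w₁) (xB w₂)
          ≤ dist (σA w₁) (σA (θ ts)) + dist (σA (θ ts)) (xB w₂) := dist_triangle _ _ _
        _ = dist (σA w₁) (σA (θ ts)) + dist (xB (θ ts)) (xB w₂) := by rw [hxeq]
    have e2 : dist (σA w₁) (σA (θ ts)) ≤ (KA : ℝ) * dist w₁ (θ ts) :=
      hdistA w₁ hw₁ (θ ts) hwsV
    have e3 : dist (xB (θ ts)) (xB w₂) ≤ (KB : ℝ) * dist (θ ts) w₂ :=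
      hdistB (θ ts) hwsV w₂ hw₂
    have e4 : dist w₁ (θ ts) + dist (θ ts) w₂ = dist w₁ w₂ :=
      dist_add_dist_of_mem_segment hwsseg
    have d1 : (0 : ℝ) ≤ dist w₁ (θ ts) := dist_nonneg
    have d2 : (0 : ℝ) ≤ dist (θ ts) w₂ := dist_nonneg
    have e5 : (KA : ℝ) * dist w₁ (θ ts) ≤ (K : ℝ) * dist w₁ (θ ts) :=
      mul_le_mul_of_nonneg_right hKA d1
    have e6 : (KB : ℝ) * dist (θ ts) w₂ ≤ (K : ℝ) * dist (θ ts) w₂ :=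
      mul_le_mul_of_nonneg_right hKB d2
    have e7 : (K : ℝ) * dist w₁ (θ ts) + (K : ℝ) * dist (θ ts) w₂ = (K : ℝ) * dist w₁ w₂ := by
      rw [← mul_add, e4]
    linarith
  have hslip : LipschitzOnWith K s V := by
    apply LipschitzOnWith.of_dist_le_mul
    intro w₁ hw₁ w₂ hw₂
    by_cases hc₁ : 0 < φ w₁ <;> by_cases hc₂ : 0 < φ w₂
    · have hs₁ : s w₁ = xB w₁ := if_pos hc₁
      have hs₂ : s w₂ = xB w₂ := if_pos hc₂
      rw [hs₁, hs₂]
      have h := hdistB w₁ hw₁ w₂ hw₂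
      have h2 : (KB : ℝ) * dist w₁ w₂ ≤ (K : ℝ) * dist w₁ w₂ :=
        mul_le_mul_of_nonneg_right hKB dist_nonneg
      linarith
    · rw [dist_comm (s w₁) (s w₂), dist_comm w₁ w₂]
      exact hmixed w₂ hw₂ w₁ hw₁ hc₂ hc₁
    · exact hmixed w₁ hw₁ w₂ hw₂ hc₁ hc₂
    · have hs₁ : s w₁ = σA w₁ := if_neg hc₁
      have hs₂ : s w₂ = σA w₂ := if_neg hc₂
      rw [hs₁, hs₂]
      have h := hdistA w₁ hw₁ w₂ hw₂
      have h2 : (KA : ℝ) * dist w₁ w₂ ≤ (K : ℝ) * dist w₁ w₂ :=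
        mul_le_mul_of_nonneg_right hKA dist_nonneg
      linarith
  -- conclusion
  refine ⟨V, ball_mem_nhds w0 hrpos, U, ball_mem_nhds x0 hρpos, s, K, hslip, hs0, ?_⟩
  intro w hw
  obtain ⟨hwVA, hwVB, hwZ1, hwsigns, -, -, hwσAU, hwxBU⟩ := hprops w hw
  apply Set.eq_singleton_iff_unique_mem.mpr
  constructor
  · -- s w is a stationary point
    by_cases hc : 0 < φ w
    · have hsw : s w = xB w := if_pos hc
      have hψpos : 0 < ψ w := hwsigns.1 hc
      obtain ⟨hBeq, hBF⟩ := hσBeq w hwVB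
      refine ⟨?_, ?_⟩
      · show F (s w, w) ≤ 0 ∧ ∃ μ : ℝ, 0 ≤ μ ∧
          gradx f₀ (s w) w + μ • gradx F (s w) w = 0 ∧ μ * F (s w, w) = 0
        rw [hsw]
        refine ⟨le_of_eq hBF, ψ w, hψpos.le, ?_, ?_⟩
        · rw [hGxeq, hGFeq]
          exact hBeq
        · rw [hBF, mul_zero]
      · rw [hsw]; exact hwxBU
    · have hsw : s w = σA w := if_neg hc
      refine ⟨?_, ?_⟩
      · show F (s w, w) ≤ 0 ∧ ∃ μ : ℝ, 0 ≤ μ ∧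
          gradx f₀ (s w) w + μ • gradx F (s w) w = 0 ∧ μ * F (s w, w) = 0
        rw [hsw]
        refine ⟨not_lt.mp hc, 0, le_rfl, ?_, ?_⟩
        · rw [hGxeq, hGFeq, zero_smul, add_zero]
          exact hσAid w hwVA
        · rw [zero_mul]
      · rw [hsw]; exact hwσAU
  · -- uniqueness
    rintro x ⟨⟨hFle, μ, hμ0, heq, hcomp⟩, hxU⟩
    rw [hGxeq, hGFeq] at heq
    -- μ is small
    obtain ⟨hnG₀, hnGF⟩ := hpair x hxU w hw
    have hGFlow : ‖g‖ / 2 < ‖GF (x, w)‖ := by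
      have h2 := norm_sub_norm_le g (GF (x, w))
      have h3 : ‖g - GF (x, w)‖ = ‖GF (x, w) - g‖ := norm_sub_rev _ _
      linarith
    have hsmul : G₀ (x, w) = -(μ • GF (x, w)) := by
      have h' := heq
      rwa [add_eq_zero_iff_eq_neg] at h'
    have hμnorm : μ * ‖GF (x, w)‖ = ‖G₀ (x, w)‖ := by
      have h1 : ‖μ • GF (x, w)‖ = ‖G₀ (x, w)‖ := by rw [hsmul, norm_neg]
      rw [norm_smul, Real.norm_eq_abs, abs_of_nonneg hμ0] at h1
      exact h1
    have hμlt : μ < ρB / 2 := by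
      by_contra hcon
      push_neg at hcon
      have hstep : μ * (‖g‖ / 2) ≤ μ * ‖GF (x, w)‖ :=
        mul_le_mul_of_nonneg_left hGFlow.le hμ0
      have hstep2 : (ρB / 2) * (‖g‖ / 2) ≤ μ * (‖g‖ / 2) :=
        mul_le_mul_of_nonneg_right hcon (by positivity)
      have hid : (ρB / 2) * (‖g‖ / 2) = ρB * ‖g‖ / 4 := by ring
      linarith
    rcases eq_or_lt_of_le hμ0 with hμz | hμpos
    · -- μ = 0 : branch A
      have hG0 : G₀ (x, w) = 0 := by
        rw [← hμz, zero_smul, add_zero] at heq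
        exact heq
      have hxA : x = σA w := hσAuniq w hwVA x (hρA (ball_subset_ball hρ_A hxU)) hG0
      have hφle : φ w ≤ 0 := by
        show F (σA w, w) ≤ 0
        rw [← hxA]
        exact hFle
      show x = s w
      rw [hsdef]
      simp only
      rw [if_neg (not_lt.mpr hφle)]
      exact hxA
    · -- μ > 0 : branch B
      have hFz : F (x, w) = 0 := by
        rcases mul_eq_zero.mp hcomp with h | h
        · exact absurd h (ne_of_gt hμpos)
        · exact h
      have hGBz : GB ((x, μ), w) = 0 := by
        show (G₀ (x, w) + μ • GF (x, w), F (x, w)) = 0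
        rw [heq, hFz]
        rfl
      have hxμUB : ((x, μ) : En n × ℝ) ∈ UB := by
        apply hρB
        rw [mem_ball]
        have hd : dist ((x, μ) : En n × ℝ) ((x0, 0) : En n × ℝ)
            = max (dist x x0) (dist μ 0) := Prod.dist_eq
        rw [hd]
        apply max_lt
        · exact lt_of_lt_of_le (mem_ball.mp hxU) hρ_B
        · rw [Real.dist_eq, sub_zero, abs_of_pos hμpos]
          linarith [hρBpos]
      have hxB' : ((x, μ) : En n × ℝ) = σB w := hσBuniq w hwVB (x, μ) hxμUB hGBz
      have hxx : x = xB w := congrArg Prod.fst hxB'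
      have hψμ : ψ w = μ := (congrArg Prod.snd hxB').symm
      have hφpos : 0 < φ w := by
        rcases lt_trichotomy (φ w) 0 with hlt | hz | hgt
        · exfalso
          have := hwsigns.2 hlt
          rw [hψμ] at this
          linarith
        · exfalso
          have hσBw := hwZ1 hz
          have : ψ w = 0 := by
            show (σB w).2 = 0
            rw [hσBw]
          rw [hψμ] at this
          linarith
        · exact hgt
      show x = s w
      rw [hsdef]
      simp only
      rw [if_pos hφpos]
      exact hxx
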